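/- If η₁, ..., η_n are i.i.d. real random variables with mean zero, |η_i| ≤ c almost surely for each i, and Var(η₁) = σ², then for any positive numbers z and d satisfying c z ≤ d and n z σ² ≤ d², one has P(|Σ_{i=1}^n η_i| ≥ 3d) ≤ 2 e^{−z}. (Lemma 3.1, exponential inequality of Lo & Singh) -/

import Mathlib

open MeasureTheory ProbabilityTheory Filter Set

noncomputable section

lemma ls_exp_bound {x : ℝ} (hx : |x| ≤ 1) : Real.exp x ≤ 1 + x + (3/4) * x ^ 2 := by
  have h := Real.exp_bound hx (n := 2) (by norm_num)
  have h2 : ∑ m ∈ Finset.range 2, x ^ m / m.factorial = 1 + x := by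
    simp [Finset.sum_range_succ]
  rw [h2] at h
  have h3 := (abs_sub_le_iff.1 h).1
  have habs : |x| ^ 2 = x ^ 2 := sq_abs x
  rw [habs] at h3
  norm_num at h3
  nlinarith [h3]

lemma ls_integrable_exp {Om : Type*} [MeasurableSpace Om] (P : Measure Om)
    [IsProbabilityMeasure P] (X : Om → ℝ) (hX : Measurable X) {c : ℝ}
    (hb : ∀ᵐ ω ∂P, |X ω| ≤ c) (s : ℝ) :
    Integrable (fun ω => Real.exp (s * X ω)) P := by
  refine Integrable.mono' (integrable_const (Real.exp (|s| * c)))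
    ((hX.const_mul s).exp.aestronglyMeasurable) ?_
  filter_upwards [hb] with ω h
  rw [Real.norm_eq_abs, abs_of_pos (Real.exp_pos _), Real.exp_le_exp]
  calc s * X ω ≤ |s * X ω| := le_abs_self _
    _ = |s| * |X ω| := abs_mul _ _
    _ ≤ |s| * c := by gcongr

lemma ls_mgf_le {Om : Type*} [MeasurableSpace Om] (P : Measure Om) [IsProbabilityMeasure P]
    (X : Om → ℝ) (hX : Measurable X) (hmean : ∫ ω, X ω ∂P = 0)
    {c : ℝ} (hb : ∀ᵐ ω ∂P, |X ω| ≤ c)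
    {sigma : ℝ} (hvar : variance X P = sigma ^ 2)
    {s : ℝ} (hsc : |s| * c ≤ 1) :
    mgf X P s ≤ Real.exp ((3/4) * s ^ 2 * sigma ^ 2) := by
  have hmem : MemLp X 2 P :=
    memLp_of_bounded (hb.mono fun ω h => abs_le.1 h) hX.aestronglyMeasurable 2
  have hint1 : Integrable X P := hmem.integrable one_le_two
  have hint2 : Integrable (fun ω => X ω ^ 2) P := by
    have := hmem.integrable_sq
    simpa [sq] using this
  have hsq : ∫ ω, X ω ^ 2 ∂P = sigma ^ 2 := by
    have h := variance_eq_sub hmem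
    rw [hvar, hmean] at h
    have : (P[X ^ 2] : ℝ) = ∫ ω, X ω ^ 2 ∂P := by
      congr 1
    simp only [this] at h
    linarith [h]
  have hintexp : Integrable (fun ω => Real.exp (s * X ω)) P :=
    ls_integrable_exp P X hX hb s
  have hpt : ∀ᵐ ω ∂P, Real.exp (s * X ω) ≤ 1 + s * X ω + (3/4) * (s * X ω) ^ 2 := by
    filter_upwards [hb] with ω h
    apply ls_exp_bound
    calc |s * X ω| = |s| * |X ω| := abs_mul _ _
      _ ≤ |s| * c := by gcongr
      _ ≤ 1 := hsc
  have hint3 : Integrable (fun ω => (3/4 * s ^ 2) * X ω ^ 2) P := hint2.const_mul _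
  have hintrhs : Integrable (fun ω => 1 + s * X ω + (3/4) * (s * X ω) ^ 2) P := by
    have heq : (fun ω => 1 + s * X ω + (3/4) * (s * X ω) ^ 2)
        = fun ω => (1 + s * X ω) + (3/4 * s ^ 2) * X ω ^ 2 := by funext ω; ring
    rw [heq]
    exact ((integrable_const 1).add (hint1.const_mul s)).add hint3
  have h1 : mgf X P s ≤ ∫ ω, (1 + s * X ω + (3/4) * (s * X ω) ^ 2) ∂P :=
    integral_mono_ae hintexp hintrhs hpt
  have h2 : ∫ ω, (1 + s * X ω + (3/4) * (s * X ω) ^ 2) ∂P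
      = 1 + (3/4) * s ^ 2 * sigma ^ 2 := by
    calc ∫ ω, (1 + s * X ω + (3/4) * (s * X ω) ^ 2) ∂P
        = ∫ ω, ((1 + s * X ω) + (3/4 * s ^ 2) * X ω ^ 2) ∂P := by
          congr 1; funext ω; ring
      _ = (∫ ω, (1 + s * X ω) ∂P) + ∫ ω, (3/4 * s ^ 2) * X ω ^ 2 ∂P :=
          integral_add ((integrable_const 1).add (hint1.const_mul s)) hint3
      _ = ((∫ _ω, (1:ℝ) ∂P) + ∫ ω, s * X ω ∂P) + ∫ ω, (3/4 * s ^ 2) * X ω ^ 2 ∂P := by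
          rw [integral_add (integrable_const 1) (hint1.const_mul s)]
      _ = 1 + (3/4) * s ^ 2 * sigma ^ 2 := by
          rw [integral_const_mul, integral_const_mul, hmean, hsq]
          simp
  rw [h2] at h1
  calc mgf X P s ≤ 1 + (3/4) * s ^ 2 * sigma ^ 2 := h1
    _ ≤ Real.exp ((3/4) * s ^ 2 * sigma ^ 2) := by
        linarith [Real.add_one_le_exp ((3/4) * s ^ 2 * sigma ^ 2)]

/-- **Lemma 3.1 (Lo & Singh's exponential inequality).** If `η₁, …, η_n` are i.i.d. with mean
zero, `|η_i| ≤ c` a.s. and `Var(η₁) = σ²`, then for positive `z`, `d` with `c z ≤ d` and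
`n z σ² ≤ d²` one has `P(|∑ η_i| ≥ 3d) ≤ 2 e^{-z}`. -/
theorem lo_singh_exponential_inequality
    {Om : Type*} [MeasurableSpace Om] (P : Measure Om) [IsProbabilityMeasure P]
    (n : ℕ) (eta : ℕ → Om → ℝ)
    (hmeas : ∀ i, Measurable (eta i))
    (hindep : iIndepFun eta P)
    (hident : ∀ i, IdentDistrib (eta i) (eta 0) P P)
    (hmean : ∫ ω, eta 0 ω ∂P = 0)
    (c : ℝ) (hc : 0 < c) (hbdd : ∀ i, ∀ᵐ ω ∂P, |eta i ω| ≤ c)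
    (sigma : ℝ) (hvar : variance (eta 0) P = sigma ^ 2)
    (z d : ℝ) (hz : 0 < z) (hd : 0 < d)
    (hcz : c * z ≤ d) (hnz : (n : ℝ) * z * sigma ^ 2 ≤ d ^ 2) :
    (P {ω | 3 * d ≤ |∑ i ∈ Finset.range n, eta i ω|}).toReal ≤ 2 * Real.exp (-z) := by
  set t : ℝ := z / d with ht_def
  have ht : 0 < t := div_pos hz hd
  have htd : t * d = z := div_mul_cancel₀ z hd.ne'
  have htc : |t| * c ≤ 1 := by
    rw [abs_of_pos ht, ht_def, div_mul_eq_mul_div, div_le_one hd]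
    nlinarith
  have htc' : |(-t)| * c ≤ 1 := by rwa [abs_neg]
  -- the key mgf bound, transferred to each i
  have hmgf : ∀ (i : ℕ) (s : ℝ), |s| * c ≤ 1 →
      mgf (eta i) P s ≤ Real.exp ((3/4) * s ^ 2 * sigma ^ 2) := by
    intro i s hs
    have heq : mgf (eta i) P s = mgf (eta 0) P s := by
      have := ((hident i).comp (Real.measurable_exp.comp (measurable_const_mul s))).integral_eq
      simpa [mgf, Function.comp] using this
    rw [heq]
    exact ls_mgf_le P (eta 0) (hmeas 0) hmean (hbdd 0) hvar hs
  have hintexp : ∀ (s : ℝ), Integrable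
      (fun ω => Real.exp (s * (∑ i ∈ Finset.range n, eta i) ω)) P := by
    intro s
    exact hindep.integrable_exp_mul_sum hmeas
      (fun i _ => ls_integrable_exp P (eta i) (hmeas i) (hbdd i) s)
  -- bound on mgf of the sum
  have hmgf_sum : ∀ (s : ℝ), |s| * c ≤ 1 →
      mgf (∑ i ∈ Finset.range n, eta i) P s
        ≤ Real.exp ((n : ℝ) * ((3/4) * s ^ 2 * sigma ^ 2)) := by
    intro s hs
    rw [hindep.mgf_sum hmeas]
    calc ∏ i ∈ Finset.range n, mgf (eta i) P s
        ≤ ∏ _i ∈ Finset.range n, Real.exp ((3/4) * s ^ 2 * sigma ^ 2) :=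
          Finset.prod_le_prod (fun i _ => mgf_nonneg) (fun i _ => hmgf i s hs)
      _ = Real.exp ((3/4) * s ^ 2 * sigma ^ 2) ^ n := by
          rw [Finset.prod_const, Finset.card_range]
      _ = Real.exp ((n : ℝ) * ((3/4) * s ^ 2 * sigma ^ 2)) := by
          rw [← Real.exp_nat_mul]
  have key : (n : ℝ) * t ^ 2 * sigma ^ 2 ≤ z := by
    have h1 : (n : ℝ) * z * sigma ^ 2 * z ≤ d ^ 2 * z :=
      mul_le_mul_of_nonneg_right hnz hz.le
    have hd2 : (0:ℝ) < d ^ 2 := by positivity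
    nlinarith [sq_nonneg sigma, sq_nonneg t]
  have hexp_le : ∀ (s : ℝ), s ^ 2 = t ^ 2 →
      Real.exp (-(t * (3 * d))) * Real.exp ((n : ℝ) * ((3/4) * s ^ 2 * sigma ^ 2))
        ≤ Real.exp (-z) := by
    intro s hs
    rw [← Real.exp_add, Real.exp_le_exp, hs]
    nlinarith [key, htd]
  -- upper tail
  have hup : (P {ω | 3 * d ≤ (∑ i ∈ Finset.range n, eta i) ω}).toReal ≤ Real.exp (-z) := by
    calc (P {ω | 3 * d ≤ (∑ i ∈ Finset.range n, eta i) ω}).toReal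
        ≤ Real.exp (-t * (3 * d)) * mgf (∑ i ∈ Finset.range n, eta i) P t :=
          measure_ge_le_exp_mul_mgf (3 * d) ht.le (hintexp t)
      _ ≤ Real.exp (-(t * (3 * d))) * Real.exp ((n : ℝ) * ((3/4) * t ^ 2 * sigma ^ 2)) := by
          rw [neg_mul]
          exact mul_le_mul_of_nonneg_left (hmgf_sum t htc) (Real.exp_pos _).le
      _ ≤ Real.exp (-z) := hexp_le t rfl
  -- lower tail
  have hlow : (P {ω | (∑ i ∈ Finset.range n, eta i) ω ≤ -(3 * d)}).toReal
      ≤ Real.exp (-z) := by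
    calc (P {ω | (∑ i ∈ Finset.range n, eta i) ω ≤ -(3 * d)}).toReal
        ≤ Real.exp (-(-t) * (-(3 * d))) * mgf (∑ i ∈ Finset.range n, eta i) P (-t) :=
          measure_le_le_exp_mul_mgf (-(3 * d)) (neg_nonpos_of_nonneg ht.le) (hintexp (-t))
      _ ≤ Real.exp (-(t * (3 * d))) * Real.exp ((n : ℝ) * ((3/4) * (-t) ^ 2 * sigma ^ 2)) := by
          have : -(-t) * (-(3 * d)) = -(t * (3 * d)) := by ring
          rw [this]
          exact mul_le_mul_of_nonneg_left (hmgf_sum (-t) htc') (Real.exp_pos _).le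
      _ ≤ Real.exp (-z) := hexp_le (-t) (by ring)
  -- combine
  have hsub : {ω | 3 * d ≤ |∑ i ∈ Finset.range n, eta i ω|}
      ⊆ {ω | 3 * d ≤ (∑ i ∈ Finset.range n, eta i) ω}
        ∪ {ω | (∑ i ∈ Finset.range n, eta i) ω ≤ -(3 * d)} := by
    intro ω hω
    simp only [Set.mem_setOf_eq, Finset.sum_apply, Set.mem_union] at *
    rcases le_abs.1 hω with h | h
    · exact Or.inl h
    · exact Or.inr (by linarith)
  have hA : P {ω | 3 * d ≤ |∑ i ∈ Finset.range n, eta i ω|}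
      ≤ P {ω | 3 * d ≤ (∑ i ∈ Finset.range n, eta i) ω}
        + P {ω | (∑ i ∈ Finset.range n, eta i) ω ≤ -(3 * d)} :=
    le_trans (measure_mono hsub) (measure_union_le _ _)
  have hfin1 : P {ω | 3 * d ≤ (∑ i ∈ Finset.range n, eta i) ω} ≠ ⊤ := measure_ne_top _ _
  have hfin2 : P {ω | (∑ i ∈ Finset.range n, eta i) ω ≤ -(3 * d)} ≠ ⊤ := measure_ne_top _ _
  calc (P {ω | 3 * d ≤ |∑ i ∈ Finset.range n, eta i ω|}).toReal
      ≤ (P {ω | 3 * d ≤ (∑ i ∈ Finset.range n, eta i) ω}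
          + P {ω | (∑ i ∈ Finset.range n, eta i) ω ≤ -(3 * d)}).toReal :=
        ENNReal.toReal_mono (by finiteness) hA
    _ = (P {ω | 3 * d ≤ (∑ i ∈ Finset.range n, eta i) ω}).toReal
        + (P {ω | (∑ i ∈ Finset.range n, eta i) ω ≤ -(3 * d)}).toReal :=
        ENNReal.toReal_add hfin1 hfin2
    _ ≤ Real.exp (-z) + Real.exp (-z) := add_le_add hup hlow
    _ = 2 * Real.exp (-z) := by ring

end
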